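/- Joint convexity step for transport costs: let c : X × X → [0, ∞] be lower semicontinuous, α : [0,∞) → [0,∞] increasing, convex, lower semicontinuous with α(0) = 0. If μ = Σᵢ λᵢ μᵢ with λ ∈ Δₘ and C is the convex hull of π₁,…,πₘ, then α(T_c(μ, C)) ≤ Σᵢ λᵢ α(T_c(μᵢ, πᵢ)), where T_c denotes the optimal transport cost and T_c(μ, C) := inf over π̃ ∈ C of T_c(μ, π̃). -/

import Mathlib

open MeasureTheory ENNReal

/-- Optimal transport cost `T_c(μ, ν) := inf over couplings γ of ∫ c dγ`. -/
noncomputable def transportCost {X : Type*} [MeasurableSpace X]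
    (c : X → X → ℝ≥0∞) (μ ν : Measure X) : ℝ≥0∞ :=
  ⨅ (γ : Measure (X × X)) (_ : γ.fst = μ ∧ γ.snd = ν), ∫⁻ p, c p.1 p.2 ∂γ

/-- The set of reweighted mixtures `C = {∑ i, λᵢ πᵢ : λ ∈ Δₘ}` (convex hull of the `πᵢ`). -/
def mixSet {X : Type*} [MeasurableSpace X] {m : ℕ} (π : Fin m → Measure X) :
    Set (Measure X) :=
  {ν | ∃ l : Fin m → ℝ≥0∞, (∑ i, l i) = 1 ∧ ν = ∑ i, l i • π i}




section Aux

variable {X : Type*} [MeasurableSpace X]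

lemma fst_finset_smul_sum {ι : Type*} (s : Finset ι) (l : ι → ℝ≥0∞)
    (γ : ι → Measure (X × X)) :
    (∑ i ∈ s, l i • γ i).fst = ∑ i ∈ s, l i • (γ i).fst := by
  classical
  induction s using Finset.induction_on with
  | empty => simp [Measure.fst]
  | insert _ _ h ih =>
      rw [Finset.sum_insert h, Finset.sum_insert h, Measure.fst_add, ih]
      congr 1
      simp [Measure.fst, Measure.map_smul]

lemma snd_finset_smul_sum {ι : Type*} (s : Finset ι) (l : ι → ℝ≥0∞)
    (γ : ι → Measure (X × X)) :
    (∑ i ∈ s, l i • γ i).snd = ∑ i ∈ s, l i • (γ i).snd := by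
  classical
  induction s using Finset.induction_on with
  | empty => simp [Measure.snd]
  | insert _ _ h ih =>
      rw [Finset.sum_insert h, Finset.sum_insert h, Measure.snd_add, ih]
      congr 1
      simp [Measure.snd, Measure.map_smul]

/-- finite Jensen for ℝ≥0∞ from the two-point convexity inequality -/
lemma jensen_finset {ι : Type*} (α : ℝ≥0∞ → ℝ≥0∞) (hα_zero : α 0 = 0)
    (hα_conv : ∀ p q : ℝ≥0∞, ∀ t : ℝ≥0∞, t ≤ 1 →
      α (t * p + (1 - t) * q) ≤ t * α p + (1 - t) * α q)
    (s : Finset ι) (l : ι → ℝ≥0∞) (x : ι → ℝ≥0∞) (hl : ∑ i ∈ s, l i = 1) :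
    α (∑ i ∈ s, l i * x i) ≤ ∑ i ∈ s, l i * α (x i) := by
  classical
  induction s using Finset.induction_on generalizing l with
  | empty => simp at hl
  | @insert a s ha ih =>
      rw [Finset.sum_insert ha] at hl ⊢
      rw [Finset.sum_insert ha]
      set t := l a with ht
      set r := ∑ i ∈ s, l i with hr
      have htle : t ≤ 1 := le_trans le_self_add hl.le
      have htne : t ≠ ∞ := ne_top_of_le_ne_top one_ne_top htle
      have hr1 : 1 - t = r := by
        rw [← hl, ENNReal.add_sub_cancel_left htne]
      by_cases hr0 : r = 0
      · -- all coefficients in s vanish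
        have hz : ∀ i ∈ s, l i = 0 := by
          intro i hi
          exact (Finset.sum_eq_zero_iff.mp (hr ▸ hr0)) i hi
        have h1 : ∑ i ∈ s, l i * x i = 0 := Finset.sum_eq_zero fun i hi => by
          simp [hz i hi]
        have h2 : ∑ i ∈ s, l i * α (x i) = 0 := Finset.sum_eq_zero fun i hi => by
          simp [hz i hi]
        rw [h1, h2, add_zero, add_zero]
        calc α (t * x a) = α (t * x a + (1 - t) * 0) := by rw [mul_zero, add_zero]
          _ ≤ t * α (x a) + (1 - t) * α 0 := hα_conv _ _ _ htle
          _ = t * α (x a) := by rw [hα_zero, mul_zero, add_zero]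
      · have hrne : r ≠ ∞ := by
          refine ne_top_of_le_ne_top one_ne_top ?_
          rw [← hl]; exact le_add_self
        -- normalized weights
        have hsum : ∑ i ∈ s, (l i / r) = 1 := by
          simp_rw [div_eq_mul_inv, ← Finset.sum_mul, ← hr, ENNReal.mul_inv_cancel hr0 hrne]
        have hrec := ih (fun i => l i / r) hsum
        have hmul : ∀ i ∈ s, r * (l i / r * x i) = l i * x i := by
          intro i hi
          rw [← mul_assoc, ENNReal.mul_div_cancel hr0 hrne]
        have hmul' : ∀ i ∈ s, r * (l i / r * α (x i)) = l i * α (x i) := by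
          intro i hi
          rw [← mul_assoc, ENNReal.mul_div_cancel hr0 hrne]
        calc α (t * x a + ∑ i ∈ s, l i * x i)
            = α (t * x a + (1 - t) * ∑ i ∈ s, (l i / r) * x i) := by
              rw [hr1, Finset.mul_sum, Finset.sum_congr rfl hmul]
          _ ≤ t * α (x a) + (1 - t) * α (∑ i ∈ s, (l i / r) * x i) :=
              hα_conv _ _ _ htle
          _ ≤ t * α (x a) + (1 - t) * ∑ i ∈ s, (l i / r) * α (x i) := by
              gcongr
          _ = t * α (x a) + ∑ i ∈ s, l i * α (x i) := by
              rw [hr1, Finset.mul_sum, Finset.sum_congr rfl hmul']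

end Aux

lemma transportCost_mix_le
    {X : Type*} [MeasurableSpace X] (c : X → X → ℝ≥0∞)
    {m : ℕ} (lam : Fin m → ℝ≥0∞) (hlam : ∑ i, lam i = 1)
    (μc π : Fin m → Measure X)
    [∀ i, IsProbabilityMeasure (μc i)] [∀ i, IsProbabilityMeasure (π i)] :
    transportCost c (∑ i, lam i • μc i) (∑ i, lam i • π i) ≤
      ∑ i, lam i * transportCost c (μc i) (π i) := by
  refine ENNReal.le_of_forall_pos_le_add fun ε hε hfin => ?_
  have hch : ∀ i : Fin m, ∃ γ : Measure (X × X),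
      (γ.fst = μc i ∧ γ.snd = π i) ∧
      ∫⁻ p, c p.1 p.2 ∂γ ≤ transportCost c (μc i) (π i) + ε := by
    intro i
    by_cases hT : transportCost c (μc i) (π i) = ∞
    · exact ⟨(μc i).prod (π i), ⟨Measure.fst_prod, Measure.snd_prod⟩,
        by rw [hT]; exact le_top.trans le_self_add⟩
    · have hlt : transportCost c (μc i) (π i) <
          transportCost c (μc i) (π i) + ε :=
        ENNReal.lt_add_right hT (by exact_mod_cast hε.ne')
      rw [transportCost] at hlt
      obtain ⟨γ, hγ⟩ := iInf_lt_iff.mp hlt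
      obtain ⟨hP, h3⟩ := iInf_lt_iff.mp hγ
      exact ⟨γ, hP, h3.le⟩
  choose γ hγ hint using hch
  have hfst : (∑ i, lam i • γ i).fst = ∑ i, lam i • μc i := by
    rw [fst_finset_smul_sum]
    exact Finset.sum_congr rfl fun i _ => by rw [(hγ i).1]
  have hsnd : (∑ i, lam i • γ i).snd = ∑ i, lam i • π i := by
    rw [snd_finset_smul_sum]
    exact Finset.sum_congr rfl fun i _ => by rw [(hγ i).2]
  have h1 : transportCost c (∑ i, lam i • μc i) (∑ i, lam i • π i) ≤
      ∫⁻ p, c p.1 p.2 ∂(∑ i, lam i • γ i) :=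
    iInf₂_le (∑ i, lam i • γ i) ⟨hfst, hsnd⟩
  have h2 : ∫⁻ p, c p.1 p.2 ∂(∑ i, lam i • γ i) =
      ∑ i, lam i * ∫⁻ p, c p.1 p.2 ∂(γ i) := by
    rw [lintegral_finset_sum_measure]
    exact Finset.sum_congr rfl fun i _ => lintegral_smul_measure _ _
  calc transportCost c (∑ i, lam i • μc i) (∑ i, lam i • π i)
      ≤ ∑ i, lam i * ∫⁻ p, c p.1 p.2 ∂(γ i) := h1.trans_eq h2
    _ ≤ ∑ i, lam i * (transportCost c (μc i) (π i) + ε) := by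
        gcongr with i
        exact hint i
    _ = ∑ i, lam i * transportCost c (μc i) (π i) + ε := by
        simp_rw [mul_add, Finset.sum_add_distrib, ← Finset.sum_mul, hlam, one_mul]

/-- Joint convexity step: if `μ = ∑ i, λᵢ μᵢ` with `λ ∈ Δₘ`, `c` is a
lower semicontinuous cost, and `α` is increasing, convex, lower semicontinuous with
`α(0) = 0`, then `α(T_c(μ, C)) ≤ ∑ i, λᵢ α(T_c(μᵢ, πᵢ))`. -/
theorem alpha_transportCost_mixSet_le
    {X : Type*} [MeasurableSpace X] [TopologicalSpace X] [PolishSpace X] [BorelSpace X]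
    (c : X → X → ℝ≥0∞)
    (hc : LowerSemicontinuous (fun p : X × X => c p.1 p.2))
    (α : ℝ≥0∞ → ℝ≥0∞)
    (hα_mono : Monotone α) (hα_zero : α 0 = 0) (hα_lsc : LowerSemicontinuous α)
    (hα_conv : ∀ p q : ℝ≥0∞, ∀ t : ℝ≥0∞, t ≤ 1 →
      α (t * p + (1 - t) * q) ≤ t * α p + (1 - t) * α q)
    {m : ℕ} (lam : Fin m → ℝ≥0∞) (hlam : ∑ i, lam i = 1)
    (μc π : Fin m → Measure X)
    [∀ i, IsProbabilityMeasure (μc i)] [∀ i, IsProbabilityMeasure (π i)] :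
    α (⨅ ν ∈ mixSet π, transportCost c (∑ i, lam i • μc i) ν) ≤
      ∑ i, lam i * α (transportCost c (μc i) (π i)) := by
  
  have hmem : (∑ i, lam i • π i) ∈ mixSet π := ⟨lam, hlam, rfl⟩
  have h1 : (⨅ ν ∈ mixSet π, transportCost c (∑ i, lam i • μc i) ν) ≤
      transportCost c (∑ i, lam i • μc i) (∑ i, lam i • π i) := biInf_le _ hmem
  have h2 := transportCost_mix_le c lam hlam μc π
  calc α (⨅ ν ∈ mixSet π, transportCost c (∑ i, lam i • μc i) ν)
      ≤ α (∑ i, lam i * transportCost c (μc i) (π i)) := hα_mono (h1.trans h2)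
    _ ≤ ∑ i, lam i * α (transportCost c (μc i) (π i)) :=
        jensen_finset α hα_zero hα_conv _ _ _ hlam
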